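/- Let $\psi:\mathbb{N}\to\mathbb{R}_{>0}$ satisfy $\liminf_{n\to\infty}\psi(n)^{1/n} = b \in (1,\infty)$. Then there exists a non-decreasing function $g:\mathbb{N}\to\mathbb{R}_{>0}$ such that (a) $g(n)\leq\psi(n)$ for all $n$, (b) $\limsup_{n\to\infty} g(n)/\psi(n) = 1$, and (c) $\lim_{n\to\infty} g(n+1)/g(n) = b$. -/

import Mathlib

open Filter Finset

private lemma log_telescope (a : ℕ) : ∀ j : ℕ, a ≤ j →
    Real.log ((j : ℝ) + 1) - Real.log ((a : ℝ) + 1) ≤ ∑ i ∈ Finset.Ico a j, ((i : ℝ) + 1)⁻¹ := by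
  refine Nat.le_induction ?_ ?_
  · simp
  · intro j hj ih
    rw [Finset.sum_Ico_succ_top hj]
    have h1 : (0 : ℝ) < (j : ℝ) + 1 := by positivity
    have h2 : (0 : ℝ) < (j : ℝ) + 2 := by positivity
    have hlog : Real.log ((j : ℝ) + 2) - Real.log ((j : ℝ) + 1) ≤ ((j : ℝ) + 1)⁻¹ := by
      have h3 := Real.log_le_sub_one_of_pos (show (0:ℝ) < ((j:ℝ)+2)/((j:ℝ)+1) by positivity)
      rw [Real.log_div h2.ne' h1.ne'] at h3
      have h4 : ((j:ℝ)+2)/((j:ℝ)+1) - 1 = ((j:ℝ)+1)⁻¹ := by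
        field_simp
        norm_num
      linarith
    have e : ((j : ℕ) : ℝ) + 1 + 1 = (j : ℝ) + 2 := by ring
    push_cast
    rw [e]
    linarith

private lemma core (u : ℕ → ℝ) (β : ℝ) (hβ : 0 < β)
    (h1 : ∀ ε : ℝ, 0 < ε → ∃ N : ℕ, ∀ n, N ≤ n → -ε * n ≤ u n)
    (h2 : ∀ ε : ℝ, 0 < ε → ∀ N : ℕ, ∃ n, N ≤ n ∧ u n ≤ ε * n) :
    ∃ v : ℕ → ℝ, (∀ n, v n ≤ u n) ∧ (∀ n, -β ≤ v (n + 1) - v n) ∧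
      Filter.Tendsto (fun n => v (n + 1) - v n) Filter.atTop (nhds 0) ∧
      (∀ N : ℕ, ∃ p, N ≤ p ∧ v p = u p) := by
  classical
  obtain ⟨N₁, hN₁⟩ := h1 1 one_pos
  -- the decreasing envelope of dips
  set E : ℕ → Set ℝ := fun n => insert 0 ((fun m : ℕ => -u m / m) '' Set.Ioi n) with hE
  have hEne : ∀ n, (E n).Nonempty := fun n => ⟨0, Set.mem_insert _ _⟩
  have hEbdd : ∀ n, BddAbove (E n) := by
    intro n
    refine ⟨1 + ∑ m ∈ Finset.range (N₁ + 1), |u m / m|, ?_⟩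
    rintro x hx
    have hsum : (0:ℝ) ≤ ∑ m ∈ Finset.range (N₁ + 1), |u m / m| :=
      Finset.sum_nonneg fun i _ => abs_nonneg _
    rcases hx with rfl | ⟨m, hm, rfl⟩
    · linarith
    · simp only [Set.mem_Ioi] at hm
      by_cases hmN : N₁ ≤ m
      · have hm0 : (0:ℝ) < m := by
          have : 0 < m := lt_of_le_of_lt (Nat.zero_le n) hm
          exact_mod_cast this
        have h5 := hN₁ m hmN
        have h6 : -u m / m ≤ 1 := by
          rw [div_le_one hm0]; linarith
        linarith
      · push_neg at hmN
        have hmem : m ∈ Finset.range (N₁ + 1) := Finset.mem_range.2 (by omega)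
        have h6 : |u m / m| ≤ ∑ k ∈ Finset.range (N₁+1), |u k / k| :=
          Finset.single_le_sum (f := fun k => |u k / (k:ℝ)|) (fun i _ => abs_nonneg _) hmem
        have h7 : -u m / m ≤ |u m / m| := by
          rw [neg_div]; exact neg_le_abs _
        linarith
  set eb : ℕ → ℝ := fun n => sSup (E n) with heb
  have eb_nonneg : ∀ n, 0 ≤ eb n := fun n => le_csSup (hEbdd n) (Set.mem_insert _ _)
  have eb_bound : ∀ i j : ℕ, i < j → -u j ≤ eb i * j := by
    intro i j hij
    have hj0 : (0:ℝ) < j := by exact_mod_cast lt_of_le_of_lt (Nat.zero_le i) hij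
    have hmem : -u j / j ∈ E i := Set.mem_insert_of_mem _ ⟨j, hij, rfl⟩
    have h8 := le_csSup (hEbdd i) hmem
    calc -u j = -u j / j * j := by field_simp
      _ ≤ eb i * j := mul_le_mul_of_nonneg_right h8 hj0.le
  have eb_anti : Antitone eb := by
    intro a c hac
    exact csSup_le_csSup (hEbdd a) (hEne c)
      (Set.insert_subset_insert (Set.image_mono fun x hx => lt_of_le_of_lt hac hx))
  have eb_tend : Tendsto eb atTop (nhds 0) := by
    rw [Metric.tendsto_atTop]
    intro ε hε
    obtain ⟨N₂, hN₂⟩ := h1 (ε / 2) (by linarith)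
    refine ⟨N₂, fun n hn => ?_⟩
    have hub : eb n ≤ ε / 2 := by
      apply csSup_le (hEne n)
      rintro x (rfl | ⟨m, hm, rfl⟩)
      · linarith
      · simp only [Set.mem_Ioi] at hm
        have hm0 : (0:ℝ) < m := by exact_mod_cast lt_of_le_of_lt (Nat.zero_le n) hm
        have h9 := hN₂ m (le_trans hn hm.le)
        rw [div_le_iff₀ hm0]; linarith
    have habs : |eb n - 0| = eb n := by rw [sub_zero, abs_of_nonneg (eb_nonneg n)]
    rw [Real.dist_eq, habs]
    linarith
  -- good (slow) points
  choose F hF1 hF2 using h2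
  have hpos2 : ∀ k : ℕ, (0:ℝ) < ((k : ℝ) + 2)⁻¹ := fun k => by positivity
  obtain ⟨ms, hms0, hmsS⟩ :
      ∃ ms : ℕ → ℕ, u (ms 0) ≤ 1 * ms 0 ∧
        ∀ K : ℕ, (2 * ms K + 1 ≤ ms (K + 1) ∧
          u (ms (K + 1)) ≤ ((K : ℝ) + 2)⁻¹ * ms (K + 1)) := by
    refine ⟨fun K => Nat.rec (F 1 one_pos 0)
      (fun k ih => F ((k : ℝ) + 2)⁻¹ (hpos2 k) (2 * ih + 1)) K, ?_, fun K => ⟨?_, ?_⟩⟩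
    · exact (hF2 1 one_pos 0)
    · exact hF1 _ _ _
    · exact hF2 _ _ _
  have hms_mono : StrictMono ms := strictMono_nat_of_lt_succ fun K => by
    have := (hmsS K).1; omega
  have hms_ge : ∀ K, K ≤ ms K := fun K => hms_mono.le_apply
  have hms_good : ∀ K : ℕ, u (ms K) ≤ ((K : ℝ) + 1)⁻¹ * ms K := by
    intro K
    cases K with
    | zero => simpa using hms0
    | succ K =>
        have h := (hmsS K).2
        have e : ((K:ℝ) + 1 + 1) = (K:ℝ) + 2 := by ring
        push_cast
        rw [e]
        exact h
  -- counting function and slopes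
  set cnt : ℕ → ℕ := fun i => ((Finset.range (i + 1)).filter fun k => ms k ≤ i).card with hcnt
  set qq : ℕ → ℝ := fun i => 2 / ((cnt i : ℝ) + 1) with hqq
  set tt : ℕ → ℝ := fun i => ((i : ℝ) + 1)⁻¹ with htt
  have qq_pos : ∀ i, 0 < qq i := fun i => by positivity
  have tt_pos : ∀ i, 0 < tt i := fun i => by positivity
  have cnt_lt : ∀ K i : ℕ, i < ms K → cnt i ≤ K := by
    intro K i hi
    have hsub : (Finset.range (i + 1)).filter (fun k => ms k ≤ i) ⊆ Finset.range K := by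
      intro k hk
      simp only [Finset.mem_filter, Finset.mem_range] at *
      exact hms_mono.lt_iff_lt.1 (lt_of_le_of_lt hk.2 hi)
    simpa using Finset.card_le_card hsub
  have cnt_ge : ∀ K i : ℕ, ms K ≤ i → K + 1 ≤ cnt i := by
    intro K i hi
    have hsub : Finset.range (K + 1) ⊆ (Finset.range (i + 1)).filter fun k => ms k ≤ i := by
      intro k hk
      simp only [Finset.mem_range] at hk
      have hk' : k ≤ K := by omega
      have h10 : ms k ≤ ms K := hms_mono.monotone hk'
      have h11 := hms_ge k
      simp only [Finset.mem_filter, Finset.mem_range]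
      omega
    simpa using Finset.card_le_card hsub
  have qq_lb : ∀ K i : ℕ, i < ms K → 2 / ((K : ℝ) + 1) ≤ qq i := by
    intro K i hi
    have h12 := cnt_lt K i hi
    have h13 : ((cnt i : ℝ) + 1) ≤ (K : ℝ) + 1 := by exact_mod_cast Nat.succ_le_succ h12
    simp only [hqq]
    gcongr
  have qq_tend : Tendsto qq atTop (nhds 0) := by
    rw [Metric.tendsto_atTop]
    intro ε hε
    obtain ⟨K, hK⟩ := exists_nat_gt (2 / ε)
    refine ⟨ms K, fun n hn => ?_⟩
    have h14 : K + 1 ≤ cnt n := cnt_ge K n hn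
    have h15 : ((K:ℝ) + 2) ≤ (cnt n : ℝ) + 1 := by exact_mod_cast Nat.succ_le_succ h14
    have h16 : qq n ≤ 2 / ((K:ℝ) + 2) := by
      simp only [hqq]
      gcongr
    have h17 : 2 / ((K:ℝ) + 2) < ε := by
      rw [div_lt_iff₀ (by positivity)]
      rw [div_lt_iff₀ hε] at hK
      nlinarith
    have habs : |qq n - 0| = qq n := by rw [sub_zero, abs_of_nonneg (qq_pos n).le]
    rw [Real.dist_eq, habs]
    linarith
  have tt_tend : Tendsto tt atTop (nhds 0) := by
    have : Tendsto (fun n : ℕ => 1 / ((n : ℝ) + 1)) atTop (nhds 0) :=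
      tendsto_one_div_add_atTop_nhds_zero_nat
    simp only [one_div] at this
    exact this
  set X : ℕ → ℝ := fun i => 4 * eb i + qq i + tt i with hX
  have X_pos : ∀ i, 0 < X i := by
    intro i
    have := eb_nonneg i; have := qq_pos i; have := tt_pos i
    rw [hX]; dsimp only; linarith
  have X_tend : Tendsto X atTop (nhds 0) := by
    have h18 : Tendsto (fun i => 4 * eb i + qq i + tt i) atTop (nhds (4*0 + 0 + 0)) :=
      ((eb_tend.const_mul 4).add qq_tend).add tt_tend
    rw [hX]
    simpa using h18
  obtain ⟨I₀, hI₀⟩ : ∃ I₀ : ℕ, ∀ i, I₀ ≤ i → X i ≤ β := by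
    have h19 := X_tend.eventually_lt_const hβ
    rw [eventually_atTop] at h19
    obtain ⟨I₀, h⟩ := h19
    exact ⟨I₀, fun i hi => (h i hi).le⟩
  set η : ℕ → ℝ := fun i => min β (X i) with hη
  have η_pos : ∀ i, 0 < η i := fun i => lt_min hβ (X_pos i)
  have η_le : ∀ i, η i ≤ β := fun i => min_le_left _ _
  have η_eqX : ∀ i, I₀ ≤ i → η i = X i := fun i hi => min_eq_right (hI₀ i hi)
  have η_tend : Tendsto η atTop (nhds 0) :=
    squeeze_zero (fun i => (η_pos i).le) (fun i => min_le_right _ _) X_tend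
  set S : ℕ → ℝ := fun n => ∑ i ∈ Finset.range n, η i with hS
  have S_mono : Monotone S := by
    intro a c hac
    exact Finset.sum_le_sum_of_subset_of_nonneg (Finset.range_subset_range.2 hac)
      (fun i _ _ => (η_pos i).le)
  have S_diff : ∀ a c : ℕ, a ≤ c → S c - S a = ∑ i ∈ Finset.Ico a c, η i := by
    intro a c hac
    rw [hS]
    dsimp only
    rw [Finset.sum_Ico_eq_sub _ hac]
  -- key summation bound
  have key0 : ∀ A j : ℕ, 4 * (A + 1) ≤ j →
      (j : ℝ) * eb (j - 1) ≤ ∑ i ∈ Finset.Ico A j, 4 * eb i := by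
    intro A j hj
    have hsub : Finset.Ico (j / 2) j ⊆ Finset.Ico A j := Finset.Ico_subset_Ico (by omega) le_rfl
    have hstep : ∀ i ∈ Finset.Ico (j / 2) j, 4 * eb (j - 1) ≤ 4 * eb i := by
      intro i hi
      simp only [Finset.mem_Ico] at hi
      have h20 : i ≤ j - 1 := by omega
      have := eb_anti h20
      linarith
    have hcard : (Finset.Ico (j / 2) j).card = j - j / 2 := Nat.card_Ico _ _
    have h21 : ((j - j / 2 : ℕ) : ℝ) * (4 * eb (j - 1)) ≤ ∑ i ∈ Finset.Ico (j / 2) j, 4 * eb i := by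
      have h22 := Finset.card_nsmul_le_sum (Finset.Ico (j/2) j)
        (fun i => 4 * eb i) (4 * eb (j-1)) hstep
      rwa [hcard, nsmul_eq_mul] at h22
    have h23 : (j : ℝ) * eb (j - 1) ≤ ((j - j / 2 : ℕ) : ℝ) * (4 * eb (j - 1)) := by
      have hnat : j ≤ 4 * (j - j / 2) := by omega
      have hc : (j:ℝ) ≤ 4 * ((j - j/2 : ℕ):ℝ) := by exact_mod_cast hnat
      nlinarith [eb_nonneg (j - 1)]
    have h24 : ∑ i ∈ Finset.Ico (j/2) j, 4 * eb i ≤ ∑ i ∈ Finset.Ico A j, 4 * eb i :=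
      Finset.sum_le_sum_of_subset_of_nonneg hsub (fun i _ _ => by linarith [eb_nonneg i])
    linarith
  -- lower bound on the competing terms
  have tail_lb : ∀ n j : ℕ, 4 * (max n I₀ + 1) ≤ j → 0 ≤ u j + (S j - S n) := by
    intro n j hj
    have hn_le_j : n ≤ j := by omega
    have h25 : S j - S n = ∑ i ∈ Finset.Ico n j, η i := S_diff n j hn_le_j
    have h26 : ∑ i ∈ Finset.Ico (max n I₀) j, η i ≤ ∑ i ∈ Finset.Ico n j, η i :=
      Finset.sum_le_sum_of_subset_of_nonneg (Finset.Ico_subset_Ico (le_max_left _ _) le_rfl)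
        (fun i _ _ => (η_pos i).le)
    have h27 : ∑ i ∈ Finset.Ico (max n I₀) j, 4 * eb i ≤ ∑ i ∈ Finset.Ico (max n I₀) j, η i := by
      apply Finset.sum_le_sum
      intro i hi
      simp only [Finset.mem_Ico] at hi
      rw [η_eqX i (le_trans (le_max_right _ _) hi.1)]
      have := qq_pos i; have := tt_pos i
      rw [hX]; dsimp only; linarith
    have h28 := key0 (max n I₀) j hj
    have h29 : -u j ≤ eb (j - 1) * j := eb_bound (j - 1) j (by omega)
    rw [mul_comm] at h29
    linarith
  have hbdd : ∀ n, BddBelow (Set.range fun j => u j + |S j - S n|) := by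
    intro n
    have hne : (Finset.range (4 * (max n I₀ + 1) + 1)).Nonempty := ⟨0, by simp⟩
    refine ⟨min 0 ((Finset.range (4 * (max n I₀ + 1) + 1)).inf' hne
      fun j => u j + |S j - S n|), ?_⟩
    rintro x ⟨j, rfl⟩
    dsimp only
    by_cases hj : j ≤ 4 * (max n I₀ + 1)
    · exact le_trans (min_le_right _ _) (Finset.inf'_le _ (Finset.mem_range.2 (by omega)))
    · push_neg at hj
      have h30 := tail_lb n j (by omega)
      have h31 : S n ≤ S j := S_mono (by omega)
      rw [abs_of_nonneg (by linarith)]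
      exact le_trans (min_le_left _ _) h30
  set v : ℕ → ℝ := fun n => sInf (Set.range fun j => u j + |S j - S n|) with hv
  have hvne : ∀ n, (Set.range fun j => u j + |S j - S n|).Nonempty := fun n => ⟨_, ⟨n, rfl⟩⟩
  have v_le : ∀ n, v n ≤ u n := by
    intro n
    have h32 := csInf_le (hbdd n) (Set.mem_range_self (f := fun j => u j + |S j - S n|) n)
    rw [hv]
    simpa using h32
  have v_diff : ∀ n, |v (n + 1) - v n| ≤ η n := by
    intro n
    have hstep : S (n + 1) - S n = η n := by
      rw [hS]; dsimp only; rw [Finset.sum_range_succ]; ring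
    rw [abs_le]
    constructor
    · have hub : ∀ j : ℕ, v n - η n ≤ u j + |S j - S (n + 1)| := by
        intro j
        have h33 : v n ≤ u j + |S j - S n| :=
          csInf_le (hbdd n) (Set.mem_range_self j)
        have h34 : |S j - S n| ≤ |S j - S (n + 1)| + η n := by
          have e : S j - S n = (S j - S (n + 1)) + η n := by rw [← hstep]; ring
          calc |S j - S n| = |(S j - S (n+1)) + η n| := by rw [e]
            _ ≤ |S j - S (n+1)| + |η n| := abs_add_le _ _
            _ = |S j - S (n+1)| + η n := by rw [abs_of_nonneg (η_pos n).le]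
        linarith
      have h35 : v n - η n ≤ v (n + 1) :=
        le_csInf (hvne (n + 1)) (by rintro x ⟨j, rfl⟩; exact hub j)
      linarith
    · have hub : ∀ j : ℕ, v (n + 1) - η n ≤ u j + |S j - S n| := by
        intro j
        have h33 : v (n+1) ≤ u j + |S j - S (n+1)| :=
          csInf_le (hbdd (n+1)) (Set.mem_range_self j)
        have h34 : |S j - S (n+1)| ≤ |S j - S n| + η n := by
          have e : S j - S (n+1) = (S j - S n) + (-η n) := by rw [← hstep]; ring
          calc |S j - S (n+1)| = |(S j - S n) + (-η n)| := by rw [e]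
            _ ≤ |S j - S n| + |(-η n)| := abs_add_le _ _
            _ = |S j - S n| + η n := by rw [abs_neg, abs_of_nonneg (η_pos n).le]
        linarith
      have h35 : v (n + 1) - η n ≤ v n :=
        le_csInf (hvne n) (by rintro x ⟨j, rfl⟩; exact hub j)
      linarith
  -- logarithmic growth helpers
  have hlog : ∀ C : ℝ, ∃ M : ℕ, ∀ j : ℕ, M ≤ j → C < Real.log ((j : ℝ) + 1) := by
    intro C
    obtain ⟨M, hM⟩ := exists_nat_gt (Real.exp C)
    refine ⟨M, fun j hj => ?_⟩
    have h36 : Real.exp C < (j : ℝ) + 1 := by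
      have : (M:ℝ) ≤ j := by exact_mod_cast hj
      linarith
    calc C = Real.log (Real.exp C) := (Real.log_exp C).symm
      _ < Real.log ((j:ℝ)+1) := Real.log_lt_log (Real.exp_pos C) h36
  have tau_sum : ∀ j : ℕ, I₀ ≤ j →
      Real.log ((j:ℝ)+1) - Real.log ((I₀:ℝ)+1) ≤ ∑ i ∈ Finset.Ico I₀ j, tt i := by
    intro j hj
    have h37 := log_telescope I₀ j hj
    rw [htt]
    exact h37
  -- V → ∞
  have hV : ∀ C : ℝ, ∃ M : ℕ, ∀ j : ℕ, M ≤ j → C < u j + S j := by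
    intro C
    obtain ⟨M₁, hM₁⟩ := hlog (C + Real.log ((I₀:ℝ)+1))
    refine ⟨max M₁ (4 * (I₀ + 1)), fun j hj => ?_⟩
    have hj1 : 4 * (I₀ + 1) ≤ j := le_trans (le_max_right _ _) hj
    have hj2 : M₁ ≤ j := le_trans (le_max_left _ _) hj
    have hIj : I₀ ≤ j := by omega
    have h38 : ∑ i ∈ Finset.Ico I₀ j, η i ≤ S j := by
      have hd := S_diff I₀ j hIj
      have hSI : 0 ≤ S I₀ := Finset.sum_nonneg fun i _ => (η_pos i).le
      linarith
    have h39 : ∑ i ∈ Finset.Ico I₀ j, (4 * eb i + tt i) ≤ ∑ i ∈ Finset.Ico I₀ j, η i := by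
      apply Finset.sum_le_sum
      intro i hi
      simp only [Finset.mem_Ico] at hi
      rw [η_eqX i hi.1]
      have := qq_pos i
      rw [hX]; dsimp only; linarith
    have h40 : ∑ i ∈ Finset.Ico I₀ j, (4 * eb i + tt i)
        = ∑ i ∈ Finset.Ico I₀ j, 4 * eb i + ∑ i ∈ Finset.Ico I₀ j, tt i :=
      Finset.sum_add_distrib
    have h41 := key0 I₀ j (by omega)
    have h42 := tau_sum j hIj
    have h43 : -u j ≤ eb (j-1) * (j:ℝ) := eb_bound (j-1) j (by omega)
    rw [mul_comm] at h43
    have h44 := hM₁ j hj2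
    linarith
  -- W → -∞ along good points
  have hW : ∀ C : ℝ, ∃ K : ℕ, u (ms K) - S (ms K) < C := by
    intro C
    obtain ⟨M₁, hM₁⟩ := hlog (Real.log ((I₀:ℝ)+1) - C)
    refine ⟨max I₀ M₁ + 1, ?_⟩
    set K' : ℕ := max I₀ M₁ with hK'
    set P : ℕ := ms (K' + 1) with hP
    have hIK : I₀ ≤ ms K' := le_trans (le_max_left _ _) (hms_ge K')
    have hgrow := (hmsS K').1
    have hmsltP : ms K' < P := hms_mono (by omega)
    have hq_pt : ∀ i ∈ Finset.Ico (ms K') P, 2 / ((K':ℝ) + 2) ≤ qq i := by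
      intro i hi
      simp only [Finset.mem_Ico] at hi
      have h45 := qq_lb (K' + 1) i hi.2
      have e : (((K' + 1 : ℕ)):ℝ) + 1 = (K':ℝ) + 2 := by push_cast; ring
      rwa [e] at h45
    have hq_sum : ((P - ms K' : ℕ):ℝ) * (2 / ((K':ℝ) + 2)) ≤
        ∑ i ∈ Finset.Ico (ms K') P, qq i := by
      have h46 := Finset.card_nsmul_le_sum (Finset.Ico (ms K') P) qq (2 / ((K':ℝ) + 2)) hq_pt
      rwa [Nat.card_Ico, nsmul_eq_mul] at h46
    have hsplit : ∑ i ∈ Finset.Ico (ms K') P, qq i + ∑ i ∈ Finset.Ico I₀ P, tt i ≤ S P := by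
      have hd := S_diff I₀ P (by omega)
      have hSI : 0 ≤ S I₀ := Finset.sum_nonneg fun i _ => (η_pos i).le
      have hcons : ∑ i ∈ Finset.Ico I₀ (ms K'), η i + ∑ i ∈ Finset.Ico (ms K') P, η i
          = ∑ i ∈ Finset.Ico I₀ P, η i :=
        Finset.sum_Ico_consecutive _ hIK hmsltP.le
      have e1 : ∑ i ∈ Finset.Ico (ms K') P, (qq i + tt i) ≤
          ∑ i ∈ Finset.Ico (ms K') P, η i := by
        apply Finset.sum_le_sum
        intro i hi
        simp only [Finset.mem_Ico] at hi
        rw [η_eqX i (le_trans hIK hi.1)]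
        have := eb_nonneg i
        rw [hX]; dsimp only; linarith
      have e2 : ∑ i ∈ Finset.Ico I₀ (ms K'), tt i ≤ ∑ i ∈ Finset.Ico I₀ (ms K'), η i := by
        apply Finset.sum_le_sum
        intro i hi
        simp only [Finset.mem_Ico] at hi
        rw [η_eqX i hi.1]
        have := eb_nonneg i; have := qq_pos i
        rw [hX]; dsimp only; linarith
      have e3 : ∑ i ∈ Finset.Ico (ms K') P, (qq i + tt i)
          = ∑ i ∈ Finset.Ico (ms K') P, qq i + ∑ i ∈ Finset.Ico (ms K') P, tt i :=
        Finset.sum_add_distrib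
      have e4 : ∑ i ∈ Finset.Ico I₀ P, tt i
          = ∑ i ∈ Finset.Ico I₀ (ms K'), tt i + ∑ i ∈ Finset.Ico (ms K') P, tt i :=
        (Finset.sum_Ico_consecutive _ hIK hmsltP.le).symm
      linarith
    have hgood := hms_good (K' + 1)
    have egood : (((K' + 1 : ℕ)):ℝ) + 1 = (K':ℝ) + 2 := by push_cast; ring
    rw [egood] at hgood
    have htau := tau_sum P (by omega)
    have hMP : M₁ ≤ P := by
      have h47 := hms_ge (K' + 1)
      omega
    have hM := hM₁ P hMP
    -- u P ≤ ∑ qq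
    have hPle : (P:ℝ) ≤ 2 * ((P - ms K' : ℕ):ℝ) := by
      have : P ≤ 2 * (P - ms K') := by omega
      exact_mod_cast this
    have hcpos : (0:ℝ) < ((K':ℝ) + 2)⁻¹ := by positivity
    have huP : u P ≤ ((P - ms K' : ℕ):ℝ) * (2 / ((K':ℝ) + 2)) := by
      have h48 : ((K':ℝ) + 2)⁻¹ * (P:ℝ) ≤ ((K':ℝ) + 2)⁻¹ * (2 * ((P - ms K' : ℕ):ℝ)) := by
        apply mul_le_mul_of_nonneg_left hPle hcpos.le
      have e5 : ((K':ℝ) + 2)⁻¹ * (2 * ((P - ms K' : ℕ):ℝ))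
          = ((P - ms K' : ℕ):ℝ) * (2 / ((K':ℝ) + 2)) := by
        field_simp
      calc u P ≤ ((K':ℝ) + 2)⁻¹ * P := hgood
        _ ≤ _ := by rw [← e5]; exact h48
    linarith
  -- touching points
  have touch : ∀ N : ℕ, ∃ p : ℕ, N ≤ p ∧ v p = u p := by
    intro N
    have hneN : (Finset.range (N + 1)).Nonempty := ⟨0, by simp⟩
    obtain ⟨K, hK⟩ := hW ((Finset.range (N + 1)).inf' hneN (fun j => u j - S j))
    obtain ⟨M, hM⟩ := hV (u (ms K) + S (ms K))
    have hne2 : (Finset.Icc (ms K) (max (ms K) M)).Nonempty :=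
      ⟨ms K, Finset.mem_Icc.2 ⟨le_rfl, le_max_left _ _⟩⟩
    obtain ⟨p₀, hp₀mem, hp₀min⟩ := Finset.exists_min_image
      (Finset.Icc (ms K) (max (ms K) M)) (fun j => u j + S j) hne2
    have hq₀p₀ : ms K ≤ p₀ := (Finset.mem_Icc.1 hp₀mem).1
    have hp₀glob : ∀ j : ℕ, ms K ≤ j → u p₀ + S p₀ ≤ u j + S j := by
      intro j hj
      by_cases hjM : j ≤ max (ms K) M
      · exact hp₀min j (Finset.mem_Icc.2 ⟨hj, hjM⟩)
      · push_neg at hjM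
        have h49 : u (ms K) + S (ms K) < u j + S j := hM j (by omega)
        have h50 : u p₀ + S p₀ ≤ u (ms K) + S (ms K) :=
          hp₀min (ms K) (Finset.mem_Icc.2 ⟨le_rfl, le_max_left _ _⟩)
        linarith
    have hne3 : (Finset.range (p₀ + 1)).Nonempty := ⟨0, by simp⟩
    obtain ⟨p, hpmem, hpmin⟩ := Finset.exists_min_image
      (Finset.range (p₀ + 1)) (fun j => u j - S j) hne3
    have hpp₀ : p ≤ p₀ := by
      have := Finset.mem_range.1 hpmem; omega
    have hWpq₀ : u p - S p ≤ u (ms K) - S (ms K) :=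
      hpmin (ms K) (Finset.mem_range.2 (by omega))
    have hNp : N < p := by
      by_contra hcon
      push_neg at hcon
      have h51 : (Finset.range (N + 1)).inf' hneN (fun j => u j - S j) ≤ u p - S p :=
        Finset.inf'_le _ (Finset.mem_range.2 (by omega))
      linarith
    have hterm : ∀ j : ℕ, u p ≤ u j + |S j - S p| := by
      intro j
      rcases le_or_gt j p with hjp | hjp
      · have hSS : S j ≤ S p := S_mono hjp
        rw [abs_of_nonpos (by linarith)]
        have h52 : u p - S p ≤ u j - S j := hpmin j (Finset.mem_range.2 (by omega))
        linarith
      · have hSS : S p ≤ S j := S_mono hjp.le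
        rw [abs_of_nonneg (by linarith)]
        have h53 : u p + S p ≤ u j + S j := by
          rcases le_or_gt j p₀ with hjp₀ | hjp₀
          · have h54 : u p - S p ≤ u j - S j := hpmin j (Finset.mem_range.2 (by omega))
            linarith
          · have h55 : u p₀ + S p₀ ≤ u j + S j := hp₀glob j (by omega)
            have h56 : u p - S p ≤ u p₀ - S p₀ := hpmin p₀ (Finset.mem_range.2 (by omega))
            have h57 : S p ≤ S p₀ := S_mono hpp₀
            linarith
        linarith
    refine ⟨p, by omega, ?_⟩
    apply le_antisymm (v_le p)
    rw [hv]
    exact le_csInf (hvne p) (by rintro x ⟨j, rfl⟩; exact hterm j)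
  refine ⟨v, v_le, ?_, ?_, touch⟩
  · intro n
    have h58 := v_diff n
    have h59 := η_le n
    rw [abs_le] at h58
    linarith [h58.1]
  · apply squeeze_zero_norm (fun n => ?_) η_tend
    exact v_diff n

/-- If `ψ : ℕ → ℝ_{>0}` satisfies `liminf ψ(n)^{1/n} = b ∈ (1,∞)`, then there is
a non-decreasing `g : ℕ → ℝ_{>0}` with `g ≤ ψ`, `limsup g/ψ = 1`, and `g(n+1)/g(n) → b`. -/
theorem stmt7 (ψ : ℕ → ℝ) (hψ : ∀ n, 0 < ψ n) (b : ℝ) (hb : 1 < b)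
    (h : Filter.liminf (fun n => ψ n ^ ((n : ℝ)⁻¹)) Filter.atTop = b) :
    ∃ g : ℕ → ℝ, (∀ n, 0 < g n) ∧ Monotone g ∧ (∀ n, g n ≤ ψ n) ∧
      Filter.limsup (fun n => g n / ψ n) Filter.atTop = 1 ∧
      Filter.Tendsto (fun n => g (n + 1) / g n) Filter.atTop (nhds b) := by
  have hb0 : (0:ℝ) < b := by linarith
  rw [Filter.liminf_eq] at h
  set A : Set ℝ := {a | ∀ᶠ n in atTop, a ≤ ψ n ^ ((n : ℝ)⁻¹)} with hA
  have hAne : A.Nonempty :=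
    ⟨0, Filter.Eventually.of_forall fun n => Real.rpow_nonneg (hψ n).le _⟩
  have hAbdd : BddAbove A := by
    by_contra hcon
    rw [Real.sSup_of_not_bddAbove hcon] at h
    linarith
  have h1 : ∀ ε : ℝ, 0 < ε → ∃ N : ℕ, ∀ n, N ≤ n →
      -ε * n ≤ Real.log (ψ n) - n * Real.log b := by
    intro ε hε
    have hc1 : b * Real.exp (-ε) < b := by
      have h40 : Real.exp (-ε) < 1 := Real.exp_lt_one_iff.2 (by linarith)
      nlinarith [Real.exp_pos (-ε)]
    have hc2 : b * Real.exp (-ε) < sSup A := by rw [h]; exact hc1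
    obtain ⟨a, haA, hca⟩ := exists_lt_of_lt_csSup hAne hc2
    rw [hA, Set.mem_setOf_eq, eventually_atTop] at haA
    obtain ⟨N, hN⟩ := haA
    refine ⟨max N 1, fun n hn => ?_⟩
    have hn1 : 1 ≤ n := le_trans (le_max_right _ _) hn
    have hnN : N ≤ n := le_trans (le_max_left _ _) hn
    have hcpos : 0 < b * Real.exp (-ε) := by positivity
    have hlt : b * Real.exp (-ε) < ψ n ^ ((n : ℝ)⁻¹) := lt_of_lt_of_le hca (hN n hnN)
    have hpow : (b * Real.exp (-ε)) ^ n < (ψ n ^ ((n : ℝ)⁻¹)) ^ n :=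
      pow_lt_pow_left₀ hlt hcpos.le (by omega)
    rw [Real.rpow_inv_natCast_pow (hψ n).le (by omega)] at hpow
    have hlog := Real.log_lt_log (pow_pos hcpos n) hpow
    rw [Real.log_pow, Real.log_mul hb0.ne' (Real.exp_ne_zero _), Real.log_exp] at hlog
    nlinarith [hlog]
  have h2 : ∀ ε : ℝ, 0 < ε → ∀ N : ℕ, ∃ n, N ≤ n ∧
      Real.log (ψ n) - n * Real.log b ≤ ε * n := by
    intro ε hε N
    by_contra hcon
    push_neg at hcon
    have hmem : b * Real.exp ε ∈ A := by
      rw [hA, Set.mem_setOf_eq, eventually_atTop]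
      refine ⟨max N 1, fun n hn => ?_⟩
      have hn1 : 1 ≤ n := le_trans (le_max_right _ _) hn
      have hnN : N ≤ n := le_trans (le_max_left _ _) hn
      have h41 := hcon n hnN
      have hcpos : 0 < b * Real.exp ε := by positivity
      have h42 : Real.log ((b * Real.exp ε) ^ n) < Real.log (ψ n) := by
        rw [Real.log_pow, Real.log_mul hb0.ne' (Real.exp_ne_zero _), Real.log_exp]
        nlinarith
      have h43 : (b * Real.exp ε) ^ n < ψ n := by
        have h44 := Real.exp_lt_exp.2 h42
        rwa [Real.exp_log (pow_pos hcpos n), Real.exp_log (hψ n)] at h44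
      have h45 : ((b * Real.exp ε) ^ n) ^ ((n:ℝ)⁻¹) ≤ (ψ n) ^ ((n:ℝ)⁻¹) :=
        Real.rpow_le_rpow (by positivity) h43.le (by positivity)
      rwa [Real.pow_rpow_inv_natCast hcpos.le (by omega)] at h45
    have h46 : b * Real.exp ε ≤ b := by
      have := le_csSup hAbdd hmem
      rwa [h] at this
    nlinarith [Real.one_lt_exp_iff.2 hε]
  obtain ⟨v, hv_le, hv_drop, hv_tend, hv_touch⟩ :=
    core (fun n => Real.log (ψ n) - n * Real.log b) (Real.log b) (Real.log_pos hb) h1 h2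
  set g : ℕ → ℝ := fun n => Real.exp (v n + n * Real.log b) with hg
  have hgψ : ∀ n, g n ≤ ψ n := by
    intro n
    have h46 : v n + n * Real.log b ≤ Real.log (ψ n) := by
      have := hv_le n
      linarith
    calc g n ≤ Real.exp (Real.log (ψ n)) := Real.exp_le_exp.2 h46
      _ = ψ n := Real.exp_log (hψ n)
  have hle1 : ∀ n, g n / ψ n ≤ 1 := fun n => (div_le_one (hψ n)).2 (hgψ n)
  have htouch1 : ∀ N : ℕ, ∃ p, N ≤ p ∧ g p / ψ p = 1 := by
    intro N
    obtain ⟨p, hp1, hp2⟩ := hv_touch N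
    refine ⟨p, hp1, ?_⟩
    have h47 : v p + p * Real.log b = Real.log (ψ p) := by
      rw [hp2]; ring
    have h48 : g p = ψ p := by
      rw [hg]; dsimp only; rw [h47, Real.exp_log (hψ p)]
    rw [h48, div_self (hψ p).ne']
  refine ⟨g, fun n => Real.exp_pos _, ?_, hgψ, ?_, ?_⟩
  · apply monotone_nat_of_le_succ
    intro n
    apply Real.exp_le_exp.2
    have h49 := hv_drop n
    have h50 : (0:ℝ) < Real.log b := Real.log_pos hb
    push_cast
    linarith
  · have hlb : ∀ a ∈ {a : ℝ | ∀ᶠ n in atTop, g n / ψ n ≤ a}, (1:ℝ) ≤ a := by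
      intro a ha
      rw [Set.mem_setOf_eq, eventually_atTop] at ha
      obtain ⟨N, hN⟩ := ha
      obtain ⟨p, hp1, hp2⟩ := htouch1 N
      have := hN p hp1
      linarith [hp2 ▸ this]
    rw [Filter.limsup_eq]
    apply le_antisymm
    · exact csInf_le ⟨1, hlb⟩ (Filter.Eventually.of_forall hle1)
    · exact le_csInf ⟨1, Filter.Eventually.of_forall hle1⟩ hlb
  · have hrat : ∀ n : ℕ, g (n+1) / g n = Real.exp ((v (n+1) - v n) + Real.log b) := by
      intro n
      rw [hg]
      dsimp only
      rw [← Real.exp_sub]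
      congr 1
      push_cast
      ring
    have h51 : Tendsto (fun n => (v (n+1) - v n) + Real.log b) atTop
        (nhds (0 + Real.log b)) := hv_tend.add_const _
    have h52 := (Real.continuous_exp.tendsto (0 + Real.log b)).comp h51
    have h53 : Real.exp (0 + Real.log b) = b := by rw [zero_add, Real.exp_log hb0]
    rw [h53] at h52
    exact Tendsto.congr (fun n => (hrat n).symm) h52
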